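/- Fix a real n×n matrix B, an integer N ≥ 1, and real m×n matrices f_t and b_t for t = 1, …, N. Define E(A, B) = Σ_{t=1}^{N} ( ‖f_t − A b_t Bᵀ‖_F² + ‖b_t − A f_t Bᵀ‖_F² ), M = Σ_{t=1}^{N} [ (B b_tᵀ)ᵀ (B b_tᵀ) + (B f_tᵀ)ᵀ (B f_tᵀ) ] and N₀ = Σ_{t=1}^{N} [ f_t B b_tᵀ + b_t B f_tᵀ ]. If a real m×m matrix A* satisfies A* M = N₀, then E(A*, B) ≤ E(A, B) for every real m×m matrix A. In particular, if M is invertible, then A* = N₀ M⁻¹ is a global minimizer of A ↦ E(A, B). -/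
import Mathlib

open Matrix

/-- Frobenius norm of a real matrix. -/
noncomputable def frobNorm {p q : ℕ} (M : Matrix (Fin p) (Fin q) ℝ) : ℝ :=
  Real.sqrt (∑ i, ∑ j, M i j ^ 2)

/-- The Burg-type total prediction error `E(A, B)`. -/
noncomputable def burgE {m n N : ℕ} (f b : Fin N → Matrix (Fin m) (Fin n) ℝ)
    (A : Matrix (Fin m) (Fin m) ℝ) (B : Matrix (Fin n) (Fin n) ℝ) : ℝ :=
  ∑ t, (frobNorm (f t - A * b t * Bᵀ) ^ 2 + frobNorm (b t - A * f t * Bᵀ) ^ 2)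

/-- `M = Σ_t [(B b_tᵀ)ᵀ (B b_tᵀ) + (B f_tᵀ)ᵀ (B f_tᵀ)]`. -/
def burgM {m n N : ℕ} (B : Matrix (Fin n) (Fin n) ℝ)
    (f b : Fin N → Matrix (Fin m) (Fin n) ℝ) : Matrix (Fin m) (Fin m) ℝ :=
  ∑ t, ((B * (b t)ᵀ)ᵀ * (B * (b t)ᵀ) + (B * (f t)ᵀ)ᵀ * (B * (f t)ᵀ))

/-- `N₀ = Σ_t [f_t B b_tᵀ + b_t B f_tᵀ]`. -/
def burgN {m n N : ℕ} (B : Matrix (Fin n) (Fin n) ℝ)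
    (f b : Fin N → Matrix (Fin m) (Fin n) ℝ) : Matrix (Fin m) (Fin m) ℝ :=
  ∑ t, (f t * B * (b t)ᵀ + b t * B * (f t)ᵀ)

/-- Squared Frobenius norm as a plain sum. -/
def fSq {p q : ℕ} (M : Matrix (Fin p) (Fin q) ℝ) : ℝ := ∑ i, ∑ j, M i j ^ 2

/-- Frobenius inner product. -/
def ipr {p q : ℕ} (X Y : Matrix (Fin p) (Fin q) ℝ) : ℝ := ∑ i, ∑ j, X i j * Y i j

lemma fSq_nonneg {p q : ℕ} (M : Matrix (Fin p) (Fin q) ℝ) : 0 ≤ fSq M :=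
  Finset.sum_nonneg fun _ _ => Finset.sum_nonneg fun _ _ => sq_nonneg _

lemma frob_sq {p q : ℕ} (M : Matrix (Fin p) (Fin q) ℝ) : frobNorm M ^ 2 = fSq M := by
  have h : (0:ℝ) ≤ ∑ i, ∑ j, M i j ^ 2 :=
    Finset.sum_nonneg fun _ _ => Finset.sum_nonneg fun _ _ => sq_nonneg _
  rw [frobNorm, Real.sq_sqrt h]; rfl

lemma ipr_mul_right {p q r : ℕ} (X : Matrix (Fin p) (Fin q) ℝ)
    (D : Matrix (Fin p) (Fin r) ℝ) (Y : Matrix (Fin r) (Fin q) ℝ) :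
    ipr X (D * Y) = ipr D (X * Yᵀ) := by
  simp only [ipr, Matrix.mul_apply, Matrix.transpose_apply, Finset.mul_sum]
  refine Finset.sum_congr rfl fun i _ => ?_
  rw [Finset.sum_comm]
  exact Finset.sum_congr rfl fun k _ => Finset.sum_congr rfl fun j _ => by ring

lemma ipr_sub {p q : ℕ} (X Y Z : Matrix (Fin p) (Fin q) ℝ) :
    ipr X (Y - Z) = ipr X Y - ipr X Z := by
  simp only [ipr, Matrix.sub_apply, mul_sub, Finset.sum_sub_distrib]

lemma ipr_add {p q : ℕ} (X Y Z : Matrix (Fin p) (Fin q) ℝ) :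
    ipr X (Y + Z) = ipr X Y + ipr X Z := by
  simp only [ipr, Matrix.add_apply, mul_add, Finset.sum_add_distrib]

lemma ipr_sum {p q N : ℕ} (X : Matrix (Fin p) (Fin q) ℝ)
    (g : Fin N → Matrix (Fin p) (Fin q) ℝ) :
    ipr X (∑ t, g t) = ∑ t, ipr X (g t) :=
  map_sum (AddMonoidHom.mk' (fun Y => ipr X Y) (fun Y Z => ipr_add X Y Z)) g Finset.univ

lemma fSq_sub {p q : ℕ} (R S : Matrix (Fin p) (Fin q) ℝ) :
    fSq (R - S) = fSq R - 2 * ipr R S + fSq S := by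
  simp only [fSq, ipr, Matrix.sub_apply, Finset.mul_sum,
    ← Finset.sum_sub_distrib, ← Finset.sum_add_distrib]
  exact Finset.sum_congr rfl fun i _ => Finset.sum_congr rfl fun j _ => by ring

lemma burgE_eq {m n N : ℕ} (f b : Fin N → Matrix (Fin m) (Fin n) ℝ)
    (A : Matrix (Fin m) (Fin m) ℝ) (B : Matrix (Fin n) (Fin n) ℝ) :
    burgE f b A B = ∑ t, (fSq (f t - A * b t * Bᵀ) + fSq (b t - A * f t * Bᵀ)) := by
  simp only [burgE, frob_sq]

lemma key {m n N : ℕ} (B : Matrix (Fin n) (Fin n) ℝ)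
    (f b : Fin N → Matrix (Fin m) (Fin n) ℝ) (Astar : Matrix (Fin m) (Fin m) ℝ)
    (h : Astar * burgM B f b = burgN B f b) (A : Matrix (Fin m) (Fin m) ℝ) :
    burgE f b Astar B ≤ burgE f b A B := by
  set D := A - Astar with hD
  have hre : ∀ t, f t - A * b t * Bᵀ = (f t - Astar * b t * Bᵀ) - D * (b t * Bᵀ) := by
    intro t
    rw [hD, Matrix.sub_mul, ← Matrix.mul_assoc, ← Matrix.mul_assoc]
    abel
  have hrb : ∀ t, b t - A * f t * Bᵀ = (b t - Astar * f t * Bᵀ) - D * (f t * Bᵀ) := by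
    intro t
    rw [hD, Matrix.sub_mul, ← Matrix.mul_assoc, ← Matrix.mul_assoc]
    abel
  set cross : ℝ := ∑ t, (ipr (f t - Astar * b t * Bᵀ) (D * (b t * Bᵀ))
      + ipr (b t - Astar * f t * Bᵀ) (D * (f t * Bᵀ))) with hcross
  have hcross0 : cross = 0 := by
    have hterm : ∀ t : Fin N,
        ipr (f t - Astar * b t * Bᵀ) (D * (b t * Bᵀ))
          + ipr (b t - Astar * f t * Bᵀ) (D * (f t * Bᵀ))
        = ipr D ((f t * B * (b t)ᵀ + b t * B * (f t)ᵀ)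
            - Astar * (((B * (b t)ᵀ)ᵀ * (B * (b t)ᵀ)) + ((B * (f t)ᵀ)ᵀ * (B * (f t)ᵀ)))) := by
      intro t
      rw [ipr_mul_right (f t - Astar * b t * Bᵀ) D (b t * Bᵀ),
        ipr_mul_right (b t - Astar * f t * Bᵀ) D (f t * Bᵀ)]
      have e1 : (f t - Astar * b t * Bᵀ) * (b t * Bᵀ)ᵀ
          = f t * B * (b t)ᵀ - Astar * ((B * (b t)ᵀ)ᵀ * (B * (b t)ᵀ)) := by
        simp only [Matrix.sub_mul, Matrix.transpose_mul, Matrix.transpose_transpose,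
          Matrix.mul_assoc]
      have e2 : (b t - Astar * f t * Bᵀ) * (f t * Bᵀ)ᵀ
          = b t * B * (f t)ᵀ - Astar * ((B * (f t)ᵀ)ᵀ * (B * (f t)ᵀ)) := by
        simp only [Matrix.sub_mul, Matrix.transpose_mul, Matrix.transpose_transpose,
          Matrix.mul_assoc]
      rw [e1, e2]
      simp only [ipr_sub, ipr_add, Matrix.mul_add]
      ring
    calc cross = ∑ t, ipr D ((f t * B * (b t)ᵀ + b t * B * (f t)ᵀ)
            - Astar * (((B * (b t)ᵀ)ᵀ * (B * (b t)ᵀ)) + ((B * (f t)ᵀ)ᵀ * (B * (f t)ᵀ)))) := by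
          rw [hcross]; exact Finset.sum_congr rfl fun t _ => hterm t
      _ = ipr D (burgN B f b - Astar * burgM B f b) := by
          rw [burgN, burgM, Matrix.mul_sum, ← Finset.sum_sub_distrib, ipr_sum]
      _ = 0 := by rw [h, sub_self]; simp [ipr]
  have expand : burgE f b A B = burgE f b Astar B - 2 * cross
      + ∑ t, (fSq (D * (b t * Bᵀ)) + fSq (D * (f t * Bᵀ))) := by
    rw [burgE_eq, burgE_eq, hcross]
    simp only [hre, hrb, fSq_sub]
    rw [Finset.mul_sum, ← Finset.sum_sub_distrib, ← Finset.sum_add_distrib]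
    exact Finset.sum_congr rfl fun t _ => by ring
  have hq : 0 ≤ ∑ t, (fSq (D * (b t * Bᵀ)) + fSq (D * (f t * Bᵀ))) :=
    Finset.sum_nonneg fun t _ => add_nonneg (fSq_nonneg _) (fSq_nonneg _)
  rw [expand, hcross0]
  linarith

theorem stmt14 (m n N : ℕ) (hN : 1 ≤ N) (B : Matrix (Fin n) (Fin n) ℝ)
    (f b : Fin N → Matrix (Fin m) (Fin n) ℝ) :
    (∀ Astar : Matrix (Fin m) (Fin m) ℝ,
      Astar * burgM B f b = burgN B f b →
        ∀ A : Matrix (Fin m) (Fin m) ℝ, burgE f b Astar B ≤ burgE f b A B) ∧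
    (IsUnit (burgM B f b) →
      ∀ A : Matrix (Fin m) (Fin m) ℝ,
        burgE f b (burgN B f b * (burgM B f b)⁻¹) B ≤ burgE f b A B) := by
  constructor
  · intro Astar h A
    exact key B f b Astar h A
  · intro hU A
    have hdet : IsUnit (burgM B f b).det := (Matrix.isUnit_iff_isUnit_det _).mp hU
    have h : burgN B f b * (burgM B f b)⁻¹ * burgM B f b = burgN B f b :=
      Matrix.nonsing_inv_mul_cancel_right _ _ hdet
    exact key B f b _ h A
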